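/- For all real x, cosh(x)·I₀(x) = Σ_{n=0}^∞ ((1/4)_n (3/4)_n) / ((1/2)_n (1/2)_n) · (x²)^n / (n!)², where I₀ is the modified Bessel function of order 0. -/

import Mathlib

/-- Modified Bessel function of the first kind of order 0, via its Taylor series. -/
noncomputable def besselI0 (x : ℝ) : ℝ :=
  ∑' n : ℕ, (x / 2) ^ (2 * n) / (Nat.factorial n : ℝ) ^ 2

/-- Pochhammer (rising factorial) symbol for real argument. -/
noncomputable def poch (a : ℝ) (n : ℕ) : ℝ := ∏ i ∈ Finset.range n, (a + i)

open Finset Polynomial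


lemma expand_aux (m : ℕ) :
    ((2*m).choose m) = ∑ n ∈ range (m+1), 2^(n-(m-n)) * n.choose (m-n) * m.choose n := by
  have h1 : ((X + 1 : ℕ[X]) ^ (2*m)).coeff m = (2*m).choose m := by
    rw [coeff_X_add_one_pow, Nat.cast_id]
  have h2 : (X + 1 : ℕ[X]) ^ (2*m) = ((X^2 + 2*X) + 1)^m := by
    rw [pow_mul]; congr 1; ring
  rw [h2, add_pow, finset_sum_coeff] at h1
  rw [← h1]
  refine Finset.sum_congr rfl fun n hn => ?_
  have hnm : n ≤ m := Nat.lt_succ_iff.mp (mem_range.mp hn)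
  have e1 : (X^2 + 2*X : ℕ[X])^n = X^n * (X + C 2)^n := by
    rw [← mul_pow]; congr 1; simp; ring
  rw [one_pow, mul_one, e1, ← C_eq_natCast, mul_assoc]
  have hm : m = (m - n) + n := (Nat.sub_add_cancel hnm).symm
  set c := m.choose n with hc
  calc (X^n * ((X + C 2 : ℕ[X])^n * C c)).coeff m
      = ((X + C 2 : ℕ[X])^n * C c).coeff (m - n) := by
        conv_lhs => rw [hm]
        exact coeff_X_pow_mul _ n (m-n)
    _ = 2^(n-(m-n)) * n.choose (m-n) * c := by
        rw [coeff_mul_C, coeff_X_add_C_pow, Nat.cast_id]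

lemma keyNat (k : ℕ) :
    ∑ s ∈ range (k+1), (2*k).choose (k+s) * (k+s).choose (k-s) * 4^s
      = (4*k).choose (2*k) := by
  have h := expand_aux (2*k)
  rw [show 2*(2*k) = 4*k by ring] at h
  rw [range_eq_Ico, ← Finset.sum_Ico_consecutive _ (Nat.zero_le k) (by omega : k ≤ 2*k+1)] at h
  have hzero : ∑ n ∈ Finset.Ico 0 k,
      2^(n-(2*k-n)) * n.choose (2*k-n) * (2*k).choose n = 0 := by
    refine Finset.sum_eq_zero fun n hn => ?_
    have hlt : n < 2*k - n := by have := (Finset.mem_Ico.mp hn).2; omega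
    rw [Nat.choose_eq_zero_of_lt hlt]; ring
  rw [hzero, zero_add, Finset.sum_Ico_eq_sum_range, show 2*k+1-k = k+1 by omega] at h
  rw [h]
  refine Finset.sum_congr rfl fun s hs => ?_
  have hsk : s ≤ k := Nat.lt_succ_iff.mp (mem_range.mp hs)
  rw [show 2*k-(k+s) = k - s by omega, show k+s-(k-s) = 2*s by omega, pow_mul]
  norm_num; ring

lemma term_eq (k i : ℕ) (h : i ≤ k) :
    (1:ℝ)/((2*i).factorial * 4^(k-i) * ((k-i).factorial)^2)
      = (((2*k).choose (k+i) * (k+i).choose (k-i) * 4^i : ℕ) : ℝ)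
        / (4^k * (2*k).factorial) := by
  have c1R : ((2*k).choose (k+i) : ℝ) * (k+i).factorial * (k-i).factorial
      = (2*k).factorial := by
    have := Nat.choose_mul_factorial_mul_factorial (show k+i ≤ 2*k by omega)
    rw [show 2*k-(k+i) = k-i by omega] at this
    exact_mod_cast congrArg (Nat.cast : ℕ → ℝ) this
  have c2R : ((k+i).choose (k-i) : ℝ) * (k-i).factorial * (2*i).factorial
      = (k+i).factorial := by
    have := Nat.choose_mul_factorial_mul_factorial (show k-i ≤ k+i by omega)
    rw [show k+i-(k-i) = 2*i by omega] at this
    exact_mod_cast congrArg (Nat.cast : ℕ → ℝ) this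
  have h4 : (4:ℝ)^k = 4^i * 4^(k-i) := by rw [← pow_add]; congr 1; omega
  have f1 : ((2*i).factorial : ℝ) ≠ 0 := Nat.cast_ne_zero.mpr (Nat.factorial_ne_zero _)
  have f2 : ((k-i).factorial : ℝ) ≠ 0 := Nat.cast_ne_zero.mpr (Nat.factorial_ne_zero _)
  have f4 : ((2*k).factorial : ℝ) ≠ 0 := Nat.cast_ne_zero.mpr (Nat.factorial_ne_zero _)
  have p1 : (4:ℝ)^(k-i) ≠ 0 := by positivity
  have p2 : (4:ℝ)^i ≠ 0 := by positivity
  push_cast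
  rw [h4]
  have hX : ((2*i).factorial : ℝ) * 4^(k-i) * ((k-i).factorial:ℝ)^2 ≠ 0 :=
    mul_ne_zero (mul_ne_zero f1 p1) (pow_ne_zero _ f2)
  have hZ : (4:ℝ)^i * 4^(k-i) * ((2*k).factorial:ℝ) ≠ 0 :=
    mul_ne_zero (mul_ne_zero p2 p1) f4
  rw [div_eq_div_iff hX hZ]
  linear_combination (-((4:ℝ)^i * 4^(k-i))) * c1R
    - (4:ℝ)^i * 4^(k-i) * ((2*k).choose (k+i) : ℝ) * ((k-i).factorial : ℝ) * c2R

lemma coeffId (k : ℕ) :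
    ∑ p ∈ Finset.HasAntidiagonal.antidiagonal k,
        (1:ℝ)/(((2*p.1).factorial : ℝ) * 4^p.2 * ((p.2.factorial : ℝ))^2)
      = ((4*k).factorial : ℝ) / ((4:ℝ)^k * ((2*k).factorial : ℝ)^3) := by
  rw [Finset.Nat.sum_antidiagonal_eq_sum_range_succ_mk]
  simp only [Nat.succ_eq_add_one]
  have step : ∀ i ∈ range (k+1),
      (1:ℝ)/(((2*i).factorial : ℝ) * 4^(k-i) * (((k-i).factorial : ℝ))^2)
      = (((2*k).choose (k+i) * (k+i).choose (k-i) * 4^i : ℕ) : ℝ) / (4^k * (2*k).factorial) := by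
    intro i hi
    exact term_eq k i (Nat.lt_succ_iff.mp (mem_range.mp hi))
  rw [Finset.sum_congr rfl step, ← Finset.sum_div, ← Nat.cast_sum, keyNat]
  rw [Nat.cast_choose ℝ (show 2*k ≤ 4*k by omega), show 4*k-2*k = 2*k by omega]
  have f4 : ((2*k).factorial : ℝ) ≠ 0 := Nat.cast_ne_zero.mpr (Nat.factorial_ne_zero _)
  have p : (4:ℝ)^k ≠ 0 := by positivity
  field_simp

lemma pochHalf (n : ℕ) : poch (1/2) n * (4^n * (n.factorial : ℝ)) = (2*n).factorial := by
  induction n with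
  | zero => simp [poch]
  | succ n ih =>
    have e2 : 2*(n+1) = (2*n+1)+1 := by ring
    have pstep : ∀ a : ℝ, poch a (n+1) = poch a n * (a + n) := fun a => Finset.prod_range_succ _ _
    rw [pstep, e2]
    simp only [Nat.factorial_succ]
    push_cast
    push_cast at ih
    linear_combination (4 * ((n:ℝ)+1) * ((1:ℝ)/2 + n)) * ih

lemma pochQQ (n : ℕ) :
    poch (1/4) n * poch (3/4) n * (64^n * ((2*n).factorial : ℝ)) = (4*n).factorial := by
  induction n with
  | zero => simp [poch]
  | succ n ih =>
    have e2 : 2*(n+1) = (2*n+1)+1 := by ring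
    have e4 : 4*(n+1) = (4*n+1+1+1)+1 := by ring
    have pstep : ∀ a : ℝ, poch a (n+1) = poch a n * (a + n) := fun a => Finset.prod_range_succ _ _
    rw [pstep, pstep, e2, e4]
    simp only [Nat.factorial_succ]
    push_cast
    push_cast at ih
    linear_combination (((1:ℝ)/4 + n) * ((3:ℝ)/4 + n) * 64 * (2*(n:ℝ)+1) * (2*(n:ℝ)+2)) * ih

theorem cosh_mul_besselI0_hypergeom (x : ℝ) :
    Real.cosh x * besselI0 x =
      ∑' n : ℕ, (poch (1/4) n * poch (3/4) n) / (poch (1/2) n * poch (1/2) n)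
        * (x ^ 2) ^ n / (Nat.factorial n : ℝ) ^ 2 := by
  have hf : Summable (fun n : ℕ => ‖x ^ (2*n) / ((2*n).factorial : ℝ)‖) := by
    refine Summable.of_nonneg_of_le (fun n => norm_nonneg _) (fun n => ?_)
      (Real.summable_pow_div_factorial (x^2))
    have : ‖x ^ (2*n) / ((2*n).factorial : ℝ)‖ = (x^2)^n / ((2*n).factorial : ℝ) := by
      rw [norm_div, norm_pow, Real.norm_natCast, pow_mul, Real.norm_eq_abs, sq_abs]
    rw [this]
    gcongr
    omega
  have hg : Summable (fun n : ℕ => ‖(x/2) ^ (2*n) / ((n.factorial : ℝ))^2‖) := by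
    refine Summable.of_nonneg_of_le (fun n => norm_nonneg _) (fun n => ?_)
      (Real.summable_pow_div_factorial ((x/2)^2))
    have : ‖(x/2) ^ (2*n) / ((n.factorial : ℝ))^2‖ = ((x/2)^2)^n / ((n.factorial : ℝ))^2 := by
      rw [norm_div, norm_pow, norm_pow, Real.norm_natCast, pow_mul, Real.norm_eq_abs, sq_abs]
    rw [this]
    have h1 : (1:ℝ) ≤ (n.factorial : ℝ) :=
      by exact_mod_cast Nat.one_le_iff_ne_zero.mpr (Nat.factorial_ne_zero n)
    gcongr
    nlinarith
  rw [Real.cosh_eq_tsum, besselI0, tsum_mul_tsum_eq_tsum_sum_antidiagonal_of_summable_norm hf hg]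
  refine tsum_congr fun n => ?_
  have hterm : ∀ p ∈ Finset.HasAntidiagonal.antidiagonal n,
      x^(2*p.1)/(((2*p.1).factorial : ℝ)) * ((x/2)^(2*p.2)/((p.2.factorial : ℝ))^2)
      = x^(2*n) * ((1:ℝ)/(((2*p.1).factorial : ℝ) * 4^p.2 * ((p.2.factorial : ℝ))^2)) := by
    intro p hp
    have hpn : p.1 + p.2 = n := Finset.HasAntidiagonal.mem_antidiagonal.mp hp
    have h2 : (x/2)^(2*p.2) = x^(2*p.2) / 4^p.2 := by
      rw [div_pow, pow_mul, pow_mul]; norm_num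
    have h3 : x^(2*n) = x^(2*p.1) * x^(2*p.2) := by
      rw [← pow_add, ← hpn]; ring_nf
    rw [h2, h3]; ring
  rw [Finset.sum_congr rfl hterm, ← Finset.mul_sum, coeffId n]
  have f1 : ((n.factorial : ℝ)) ≠ 0 := Nat.cast_ne_zero.mpr (Nat.factorial_ne_zero _)
  have f2 : (((2*n).factorial : ℝ)) ≠ 0 := Nat.cast_ne_zero.mpr (Nat.factorial_ne_zero _)
  have p4 : (4:ℝ)^n ≠ 0 := by positivity
  have hbv : poch (1/2) n = ((2*n).factorial : ℝ) / (4^n * (n.factorial : ℝ)) := by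
    rw [eq_div_iff (by positivity)]; exact pochHalf n
  have hav : poch (1/4) n * poch (3/4) n
      = ((4*n).factorial : ℝ) / (64^n * ((2*n).factorial : ℝ)) := by
    rw [eq_div_iff (by positivity)]; exact pochQQ n
  rw [hav, hbv, show (64:ℝ)^n = 4^n*4^n*4^n from by rw [← mul_pow, ← mul_pow]; norm_num,
    ← pow_mul]
  field_simp
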